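/- Let M be a commutative idempotent monoid acting additively on an abelian group G, F : M → G a function satisfying the chain rule, and X_1, …, X_n ∈ M. Let q ≥ 1 and let L_1, …, L_q ⊆ [n] be pairwise disjoint subsets. Then for every nonempty I ⊆ [q]: F(;_{i∈I} X_{L_i}) = Σ over all families (W_i)_{i∈I} with ∅ ≠ W_i ⊆ L_i for each i ∈ I of X_{L_I ∖ W_I}.F(;_{w∈W_I} X_w), where L_I = ⋃_{i∈I} L_i and W_I = ⋃_{i∈I} W_i. -/

import Mathlib

namespace AMRF
/-- An additive monoid action of a commutative monoid `M` on an abelian group `G`. -/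
structure MAction (M G : Type*) [CommMonoid M] [AddCommGroup G] where
  act : M → G → G
  act_one : ∀ g, act 1 g = g
  act_mul : ∀ X Y g, act X (act Y g) = act (X * Y) g
  act_add : ∀ X g h, act X (g + h) = act X g + act X h

variable {M G : Type*} [CommMonoid M] [AddCommGroup G]

/-- `F : M → G` satisfies the chain rule `F(XY) = F(X) + X.F(Y)`. -/
def ChainRule (A : MAction M G) (F : M → G) : Prop :=
  ∀ X Y : M, F (X * Y) = F X + A.act X (F Y)

/-- Higher-order terms on a *reversed* argument list: the head of the list is the *last*
argument `Y_q` in `F_q(Y₁; …; Y_q)`. -/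
def Fseq (A : MAction M G) (F : M → G) : List M → G
  | [] => 0
  | [Y] => F Y
  | Y :: Z :: l => Fseq A F (Z :: l) - A.act Y (Fseq A F (Z :: l))

/-- `Fof A F [Y₁, …, Y_q] = F_q(Y₁; …; Y_q)`, defined inductively by
`F_q(Y₁; …; Y_q) = F_{q−1}(Y₁; …; Y_{q−1}) − Y_q.F_{q−1}(Y₁; …; Y_{q−1})`. -/
def Fof (A : MAction M G) (F : M → G) (l : List M) : G :=
  Fseq A F l.reverse

/-- The interaction term `F(;_{i∈I} X_i)`, with arguments in increasing index order. -/
def Fint (A : MAction M G) (F : M → G) {ι : Type*} [LinearOrder ι] (X : ι → M)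
    (I : Finset ι) : G :=
  Fof A F ((I.sort (· ≤ ·)).map X)

/-- The `F`-independence relation: `X ⊥_F Y | Z` iff `Z.F(X; Y) = 0`, where
`F(X; Y) = F(X) − Y.F(X)` is the second-order term. -/
def Findep (A : MAction M G) (F : M → G) (X Y Z : M) : Prop :=
  A.act Z (F X - A.act Y (F X)) = 0

/-- The action as an additive monoid hom. -/
def MAction.hom (A : MAction M G) (X : M) : G →+ G :=
  AddMonoidHom.mk' (A.act X) (A.act_add X)

lemma act_zero (A : MAction M G) (X : M) : A.act X 0 = 0 :=
  (A.hom X).map_zero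

lemma act_sub (A : MAction M G) (X : M) (g h : G) :
    A.act X (g - h) = A.act X g - A.act X h :=
  (A.hom X).map_sub g h

lemma act_sum (A : MAction M G) (X : M) {α : Type*} (s : Finset α) (f : α → G) :
    A.act X (∑ a ∈ s, f a) = ∑ a ∈ s, A.act X (f a) :=
  map_sum (A.hom X) f s

lemma F_one {A : MAction M G} {F : M → G} (hF : ChainRule A F) : F 1 = 0 := by
  have h := hF 1 1
  rw [mul_one, A.act_one] at h
  have := add_left_cancel (a := F 1) (b := 0) (c := F 1) (by rw [add_zero]; exact h)
  exact this.symm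

lemma Fseq_cons (A : MAction M G) (F : M → G) (Y : M) {l : List M} (hl : l ≠ []) :
    Fseq A F (Y :: l) = Fseq A F l - A.act Y (Fseq A F l) := by
  cases l with
  | nil => exact absurd rfl hl
  | cons Z l => rfl

lemma Fseq_perm (A : MAction M G) (F : M → G) (hF : ChainRule A F) :
    ∀ {l l' : List M}, l.Perm l' → Fseq A F l = Fseq A F l' := by
  intro l l' h
  induction h with
  | nil => rfl
  | cons x p ih =>
    rename_i l₁ l₂
    cases l₁ with
    | nil => rw [p.symm.eq_nil]
    | cons a t =>
      have h₂ : l₂ ≠ [] := by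
        intro h'; rw [h'] at p; exact (List.cons_ne_nil a t) p.eq_nil
      rw [Fseq_cons A F x (List.cons_ne_nil a t), Fseq_cons A F x h₂, ih]
  | swap x y l =>
    cases l with
    | nil =>
      show F x - A.act y (F x) = F y - A.act x (F y)
      have h1 := hF x y
      have h2 := hF y x
      rw [mul_comm] at h2
      rw [h2] at h1
      rw [sub_eq_sub_iff_add_eq_add]
      exact h1.symm
    | cons a t =>
      have hne : (a :: t) ≠ [] := List.cons_ne_nil a t
      rw [Fseq_cons A F x (List.cons_ne_nil y (a :: t)),
        Fseq_cons A F y (List.cons_ne_nil x (a :: t)),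
        Fseq_cons A F y hne, Fseq_cons A F x hne]
      set g := Fseq A F (a :: t)
      rw [act_sub, act_sub, A.act_mul, A.act_mul, mul_comm x y]
      abel
  | trans _ _ ih1 ih2 => exact ih1.trans ih2

lemma Fof_perm (A : MAction M G) (F : M → G) (hF : ChainRule A F) {l l' : List M}
    (h : l.Perm l') : Fof A F l = Fof A F l' :=
  Fseq_perm A F hF (((l.reverse_perm).trans h).trans (l'.reverse_perm).symm)

lemma Fof_append (A : MAction M G) (F : M → G) (Y : M) {l : List M} (hl : l ≠ []) :
    Fof A F (l ++ [Y]) = Fof A F l - A.act Y (Fof A F l) := by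
  unfold Fof
  rw [List.reverse_append, List.reverse_singleton, List.singleton_append]
  exact Fseq_cons A F Y (by simpa using hl)

lemma Fint_empty (A : MAction M G) (F : M → G) {ι : Type*} [LinearOrder ι] (X : ι → M) :
    Fint A F X (∅ : Finset ι) = 0 := by
  simp [Fint, Fof, Fseq]

lemma Fint_singleton (A : MAction M G) (F : M → G) {ι : Type*} [LinearOrder ι] (X : ι → M)
    (a : ι) : Fint A F X ({a} : Finset ι) = F (X a) := by
  simp [Fint, Finset.sort_singleton, Fof, Fseq]

lemma Fint_insert (A : MAction M G) (F : M → G) (hF : ChainRule A F) {ι : Type*}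
    [LinearOrder ι] [DecidableEq ι] (X : ι → M) {S : Finset ι} {t : ι} (ht : t ∉ S)
    (hS : S.Nonempty) :
    Fint A F X (insert t S) = Fint A F X S - A.act (X t) (Fint A F X S) := by
  have hperm : ((insert t S).sort (· ≤ ·)).Perm ((S.sort (· ≤ ·)) ++ [t]) := by
    refine ((insert t S).sort_perm_toList (· ≤ ·)).trans ?_
    refine (Finset.toList_insert ht).trans ?_
    refine (List.perm_append_singleton t _).symm.trans ?_
    exact (List.Perm.append_right [t] (S.sort_perm_toList (· ≤ ·)).symm)
  have hmap := hperm.map X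
  rw [List.map_append] at hmap
  have hne : (S.sort (· ≤ ·)).map X ≠ [] := by
    intro h
    have := Finset.length_sort (α := ι) (· ≤ ·) (s := S)
    rw [← List.length_map X, h, List.length_nil] at this
    exact hS.ne_empty (Finset.card_eq_zero.mp this.symm)
  rw [Fint, Fof_perm A F hF hmap, List.map_singleton, Fof_append A F (X t) hne]
  rfl

lemma insert_sdiff₁ {α : Type*} [DecidableEq α] {t : α} {T V : Finset α} (h : t ∉ V) :
    (insert t T) \ V = insert t (T \ V) := by
  ext x
  simp only [Finset.mem_sdiff, Finset.mem_insert]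
  by_cases hx : x = t
  · subst hx; tauto
  · tauto

lemma insert_sdiff₂ {α : Type*} [DecidableEq α] {t : α} {T V : Finset α} (h : t ∉ T) :
    (insert t T) \ (insert t V) = T \ V := by
  ext x
  simp only [Finset.mem_sdiff, Finset.mem_insert]
  by_cases hx : x = t
  · subst hx; tauto
  · tauto

lemma sdiff_union_helper {α : Type*} [DecidableEq α] {C T B V : Finset α} (hBC : B ⊆ C)
    (hVT : V ⊆ T) (hCT : Disjoint C T) : (T ∪ C) \ (V ∪ B) = (T \ V) ∪ (C \ B) := by
  ext x
  simp only [Finset.mem_sdiff, Finset.mem_union]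
  have h1 : x ∈ B → x ∈ C := fun h => hBC h
  have h2 : x ∈ V → x ∈ T := fun h => hVT h
  have h3 : x ∈ C → x ∉ T := fun h => Finset.disjoint_left.mp hCT h
  tauto

lemma sum_powerset_formula {n : ℕ} (A : MAction M G) (F : M → G) (hF : ChainRule A F)
    (X : Fin n → M) {S : Finset (Fin n)} (hS : S.Nonempty) :
    ∀ {T : Finset (Fin n)}, Disjoint S T →
      Fint A F X S = ∑ V ∈ T.powerset, A.act (∏ a ∈ T \ V, X a) (Fint A F X (S ∪ V)) := by
  intro T
  induction T using Finset.induction_on with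
  | empty => intro _; simp [A.act_one]
  | @insert t T htT ihT =>
    intro hST
    have hST' : Disjoint S T := hST.mono_right (Finset.subset_insert t T)
    have htS : t ∉ S := fun h => (Finset.disjoint_left.mp hST h) (Finset.mem_insert_self t T)
    rw [Finset.sum_powerset_insert htT, ihT hST', ← Finset.sum_add_distrib]
    refine Finset.sum_congr rfl fun V hV => ?_
    have hVT : V ⊆ T := Finset.mem_powerset.mp hV
    have htV : t ∉ V := fun h => htT (hVT h)
    have htSV : t ∉ S ∪ V := by
      simp only [Finset.mem_union]; exact fun h => h.elim htS htV
    have htTV : t ∉ T \ V := fun h => htT (Finset.mem_sdiff.mp h).1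
    rw [insert_sdiff₁ htV, Finset.prod_insert htTV, insert_sdiff₂ htT,
      Finset.union_insert, Fint_insert A F hF X htSV (hS.mono Finset.subset_union_left),
      act_sub, ← A.act_mul]
    have hcomm : A.act (∏ a ∈ T \ V, X a) (A.act (X t) (Fint A F X (S ∪ V))) =
        A.act (X t) (A.act (∏ a ∈ T \ V, X a) (Fint A F X (S ∪ V))) := by
      rw [A.act_mul, A.act_mul, mul_comm]
    rw [hcomm]
    abel

lemma F_prod (A : MAction M G) (F : M → G) (hF : ChainRule A F) {n : ℕ} (X : Fin n → M)
    (S : Finset (Fin n)) :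
    F (∏ a ∈ S, X a) = ∑ W ∈ S.powerset, A.act (∏ a ∈ S \ W, X a) (Fint A F X W) := by
  induction S using Finset.induction_on with
  | empty => simp [F_one hF, Fint_empty, act_zero]
  | @insert s S hs ih =>
    rw [Finset.prod_insert hs, hF (X s) (∏ a ∈ S, X a), ih, Finset.sum_powerset_insert hs,
      act_sum]
    have hFs : F (X s) =
        ∑ V ∈ S.powerset, A.act (∏ a ∈ S \ V, X a) (Fint A F X (insert s V)) := by
      have hdisj : Disjoint ({s} : Finset (Fin n)) S := Finset.disjoint_singleton_left.mpr hs
      have h := sum_powerset_formula A F hF X (Finset.singleton_nonempty s) hdisj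
      rw [Fint_singleton] at h
      refine h.trans (Finset.sum_congr rfl fun V hV => ?_)
      congr 1
    rw [hFs, add_comm]
    congr 1
    · refine Finset.sum_congr rfl fun W hW => ?_
      have hW' : W ⊆ S := Finset.mem_powerset.mp hW
      have hsW : s ∉ W := fun h => hs (hW' h)
      have hsSW : s ∉ S \ W := fun h => hs (Finset.mem_sdiff.mp h).1
      rw [insert_sdiff₁ hsW, Finset.prod_insert hsSW, ← A.act_mul]
    · refine Finset.sum_congr rfl fun V hV => ?_
      rw [insert_sdiff₂ hs]

/-- Let `L₁, …, L_q ⊆ [n]` be pairwise disjoint. Then for every nonempty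
`I ⊆ [q]`:
`F(;_{i∈I} X_{Lᵢ}) = Σ_{(Wᵢ)_{i∈I}, ∅ ≠ Wᵢ ⊆ Lᵢ} X_{L_I ∖ W_I}.F(;_{w∈W_I} X_w)`,
where the sum runs over all families `(Wᵢ)_{i∈I}` of nonempty subsets `Wᵢ ⊆ Lᵢ`
(encoded as functions `W : Fin q → Finset (Fin n)` vanishing off `I`),
`L_I = ⋃_{i∈I} Lᵢ` and `W_I = ⋃_{i∈I} Wᵢ`. -/
theorem interaction_sum_formula
    {M G : Type*} [CommMonoid M] [AddCommGroup G]
    (hidem : ∀ x : M, x * x = x)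
    (A : MAction M G) (F : M → G) (hF : ChainRule A F)
    (n q : ℕ) (hq : 1 ≤ q) (X : Fin n → M) (L : Fin q → Finset (Fin n))
    (hL : ∀ i j : Fin q, i ≠ j → Disjoint (L i) (L j))
    (I : Finset (Fin q)) (hI : I.Nonempty) :
    Fint A F (fun i => ∏ a ∈ L i, X a) I =
      ∑ W ∈ (Finset.univ : Finset (Fin q → Finset (Fin n))).filter
          (fun W => ∀ i : Fin q,
            (i ∈ I → W i ⊆ L i ∧ (W i).Nonempty) ∧ (i ∉ I → W i = ∅)),
        A.act (∏ a ∈ I.biUnion L \ I.biUnion W, X a) (Fint A F X (I.biUnion W)) := by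
  induction hI using Finset.Nonempty.cons_induction with
  | singleton m =>
    rw [Fint_singleton]
    rw [F_prod A F hF X (L m)]
    have hzero : ∀ V ∈ (L m).powerset,
        A.act (∏ a ∈ L m \ V, X a) (Fint A F X V) ≠ 0 → V.Nonempty := by
      intro V _ hne
      rcases V.eq_empty_or_nonempty with rfl | h
      · exact absurd (by rw [Fint_empty, act_zero]) hne
      · exact h
    rw [← Finset.sum_filter_of_ne hzero]
    refine Finset.sum_nbij' (i := fun V => fun j => if j = m then V else (∅ : Finset (Fin n)))
      (j := fun W => W m) ?_ ?_ ?_ ?_ ?_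
    · intro V hV
      rw [Finset.mem_filter, Finset.mem_powerset] at hV
      rw [Finset.mem_filter]
      refine ⟨Finset.mem_univ _, fun i => ⟨fun hi => ?_, fun hi => ?_⟩⟩
      · rw [Finset.mem_singleton] at hi
        subst hi
        simpa using hV
      · have him : ¬ i = m := by simpa using hi
        show (if i = m then V else (∅ : Finset (Fin n))) = ∅
        rw [if_neg him]
    · intro W hW
      rw [Finset.mem_filter] at hW
      rw [Finset.mem_filter, Finset.mem_powerset]
      have h := (hW.2 m).1 (Finset.mem_singleton_self m)
      exact ⟨h.1, h.2⟩
    · intro V _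
      dsimp only
      rw [if_pos rfl]
    · intro W hW
      rw [Finset.mem_filter] at hW
      funext j
      by_cases hj : j = m
      · subst hj; rw [if_pos rfl]
      · rw [if_neg hj]
        exact ((hW.2 j).2 (by simpa using hj)).symm
    · intro V hV
      rw [Finset.mem_filter, Finset.mem_powerset] at hV
      have h1 : Finset.biUnion {m} (fun j => if j = m then V else (∅ : Finset (Fin n))) = V := by
        rw [Finset.singleton_biUnion, if_pos rfl]
      have h2 : Finset.biUnion {m} L = L m := Finset.singleton_biUnion
      rw [h1, h2]
  | cons m I hmI hI ih =>
    rw [Finset.cons_eq_insert]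
    set Y : Fin q → M := fun i => ∏ a ∈ L i, X a with hY
    have hre :
        (∑ W ∈ (Finset.univ : Finset (Fin q → Finset (Fin n))).filter
            (fun W => ∀ i : Fin q,
              (i ∈ insert m I → W i ⊆ L i ∧ (W i).Nonempty) ∧ (i ∉ insert m I → W i = ∅)),
          A.act (∏ a ∈ (insert m I).biUnion L \ (insert m I).biUnion W, X a)
            (Fint A F X ((insert m I).biUnion W))) =
        ∑ p ∈ ((Finset.univ : Finset (Fin q → Finset (Fin n))).filter
            (fun W => ∀ i : Fin q,
              (i ∈ I → W i ⊆ L i ∧ (W i).Nonempty) ∧ (i ∉ I → W i = ∅))) ×ˢ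
            ((L m).powerset.filter (fun V => V.Nonempty)),
          A.act (∏ a ∈ (insert m I).biUnion L \
              (insert m I).biUnion (Function.update p.1 m p.2), X a)
            (Fint A F X ((insert m I).biUnion (Function.update p.1 m p.2))) := by
      refine Finset.sum_nbij' (i := fun W' => (Function.update W' m ∅, W' m))
        (j := fun p => Function.update p.1 m p.2) ?_ ?_ ?_ ?_ ?_
      · intro W' hW'
        rw [Finset.mem_filter] at hW'
        rw [Finset.mem_product]
        constructor
        · rw [Finset.mem_filter]
          refine ⟨Finset.mem_univ _, fun i => ⟨fun hi => ?_, fun hi => ?_⟩⟩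
          · have him : i ≠ m := fun h => hmI (h ▸ hi)
            show Function.update W' m ∅ i ⊆ L i ∧ (Function.update W' m ∅ i).Nonempty
            rw [Function.update_of_ne him]
            exact (hW'.2 i).1 (Finset.mem_insert_of_mem hi)
          · show Function.update W' m ∅ i = ∅
            by_cases him : i = m
            · subst him; rw [Function.update_self]
            · rw [Function.update_of_ne him]
              exact (hW'.2 i).2 (by simp [him, hi])
        · show W' m ∈ (L m).powerset.filter (fun V => V.Nonempty)
          rw [Finset.mem_filter, Finset.mem_powerset]
          have h := (hW'.2 m).1 (Finset.mem_insert_self m I)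
          exact ⟨h.1, h.2⟩
      · intro p hp
        rw [Finset.mem_product, Finset.mem_filter, Finset.mem_filter,
          Finset.mem_powerset] at hp
        rw [Finset.mem_filter]
        refine ⟨Finset.mem_univ _, fun i => ⟨fun hi => ?_, fun hi => ?_⟩⟩
        · by_cases him : i = m
          · subst him; rw [Function.update_self]; exact hp.2
          · rw [Function.update_of_ne him]
            exact (hp.1.2 i).1 (by
              rcases Finset.mem_insert.mp hi with h | h
              · exact absurd h him
              · exact h)
        · have him : i ≠ m := fun h => hi (h ▸ Finset.mem_insert_self m I)
          rw [Function.update_of_ne him]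
          exact (hp.1.2 i).2 (fun h => hi (Finset.mem_insert_of_mem h))
      · intro W' hW'
        dsimp only
        rw [Function.update_idem, Function.update_eq_self]
      · intro p hp
        rw [Finset.mem_product, Finset.mem_filter, Finset.mem_filter,
          Finset.mem_powerset] at hp
        have hpm : p.1 m = ∅ := (hp.1.2 m).2 hmI
        rw [Function.update_idem, Function.update_self, ← hpm, Function.update_eq_self]
      · intro W' hW'
        dsimp only
        rw [Function.update_idem, Function.update_eq_self]
    rw [Fint_insert A F hF Y hmI hI, ih, act_sum, ← Finset.sum_sub_distrib, hre,
      Finset.sum_product]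
    refine Finset.sum_congr rfl fun W hW => ?_
    rw [Finset.mem_filter] at hW
    have hWc := hW.2
    set B := I.biUnion W with hB
    set C := I.biUnion L with hC
    set T := L m with hT
    have hBC : B ⊆ C := by
      rw [hB, hC]
      refine Finset.biUnion_subset.mpr fun i hi => ?_
      exact ((hWc i).1 hi).1.trans (Finset.subset_biUnion_of_mem L hi)
    have hCT : Disjoint C T := by
      rw [hC, hT, Finset.disjoint_biUnion_left]
      intro i hi
      exact hL i m (fun h => hmI (h ▸ hi))
    have hBne : B.Nonempty := by
      obtain ⟨i, hi⟩ := hI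
      obtain ⟨x, hx⟩ := ((hWc i).1 hi).2
      exact ⟨x, Finset.mem_biUnion.mpr ⟨i, hi, hx⟩⟩
    have hBT : Disjoint B T := hCT.mono_left hBC
    have hA := sum_powerset_formula A F hF X hBne hBT
    have hsplit : Fint A F X B - A.act (∏ a ∈ T, X a) (Fint A F X B) =
        ∑ V ∈ T.powerset.filter (fun V => V.Nonempty),
          A.act (∏ a ∈ T \ V, X a) (Fint A F X (B ∪ V)) := by
      have hnot : T.powerset.filter (fun V => ¬ V.Nonempty) = {∅} := by
        ext V
        simp only [Finset.mem_filter, Finset.mem_powerset, Finset.mem_singleton,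
          Finset.not_nonempty_iff_eq_empty]
        constructor
        · exact fun h => h.2
        · intro h; subst h; exact ⟨Finset.empty_subset T, rfl⟩
      have hsum := Finset.sum_filter_add_sum_filter_not T.powerset (fun V => V.Nonempty)
        (fun V => A.act (∏ a ∈ T \ V, X a) (Fint A F X (B ∪ V)))
      rw [hnot, Finset.sum_singleton, Finset.sdiff_empty, Finset.union_empty] at hsum
      rw [sub_eq_iff_eq_add, hsum]
      exact hA
    have hYm : Y m = ∏ a ∈ T, X a := rfl
    have hcomm : A.act (Y m) (A.act (∏ a ∈ C \ B, X a) (Fint A F X B)) =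
        A.act (∏ a ∈ C \ B, X a) (A.act (∏ a ∈ T, X a) (Fint A F X B)) := by
      rw [hYm, A.act_mul, A.act_mul, mul_comm]
    rw [hcomm, ← act_sub, hsplit, act_sum]
    refine Finset.sum_congr rfl fun V hV => ?_
    rw [Finset.mem_filter, Finset.mem_powerset] at hV
    have hbiW : (insert m I).biUnion (Function.update W m V) = V ∪ B := by
      rw [Finset.biUnion_insert, Function.update_self, hB]
      congr 1
      refine Finset.biUnion_congr rfl fun i hi => ?_
      have him : i ≠ m := fun h => hmI (h ▸ hi)
      exact Function.update_of_ne him V W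
    have hbiL : (insert m I).biUnion L = T ∪ C := Finset.biUnion_insert
    have hdisj : Disjoint (T \ V) (C \ B) :=
      hCT.symm.mono Finset.sdiff_subset Finset.sdiff_subset
    rw [hbiW, hbiL, sdiff_union_helper hBC hV.1 hCT, A.act_mul,
      Finset.union_comm V B, Finset.prod_union hdisj, mul_comm]

end AMRF
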